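/- Let T_1, T_2, ... be i.i.d. random variables, each exponentially distributed with rate 1, let c > 0 and x_0 ≥ 0, and define X_n = x_0 + c·∑_{i=1}^n T_i − n for each natural number n. Then for every integer n ≥ 1, the probability that X_k ≤ 0 for some k ∈ {1, ..., n} is at least 1 − ∑_{k=0}^{n−1} (y_n^k / k!)·e^{−y_n}, where y_n = max{(n − x_0)/c, 0}. -/

import Mathlib

open MeasureTheory ProbabilityTheory

/-- The discrete-time skeleton of the Cramér–Lundberg process:
`X_n = x₀ + c·∑_{i=1}^n T_i − n` (the `n` i.i.d. variables are `T 0, …, T (n-1)`). -/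
noncomputable def CLskeleton {Ω : Type*} (T : ℕ → Ω → ℝ) (c x₀ : ℝ) (n : ℕ) (ω : Ω) : ℝ :=
  x₀ + c * ∑ i ∈ Finset.range n, T i ω - n

section CLaux
set_option linter.unusedSectionVars false
open Real Set

lemma expMeasure_Iic {a : ℝ} : expMeasure 1 (Set.Iic a) =
    ENNReal.ofReal (if 0 ≤ a then 1 - Real.exp (-a) else 0) := by
  rw [expMeasure, gammaMeasure, withDensity_apply _ measurableSet_Iic]
  have := lintegral_exponentialPDF_eq_antiDeriv (r := 1) one_pos a
  simpa [exponentialPDF, exponentialPDFReal, gammaPDF, one_mul] using this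

lemma expMeasure_Ioi {a : ℝ} (ha : 0 ≤ a) :
    expMeasure 1 (Set.Ioi a) = ENNReal.ofReal (Real.exp (-a)) := by
  have hP : IsProbabilityMeasure (expMeasure 1) := isProbabilityMeasure_expMeasure one_pos
  have h1 : (Set.Ioi a) = (Set.Iic a)ᶜ := by ext x; simp
  rw [h1, measure_compl measurableSet_Iic (measure_ne_top _ _), expMeasure_Iic, if_pos ha,
    measure_univ, ← ENNReal.ofReal_one, ← ENNReal.ofReal_sub _ (by simp [Real.exp_le_one_iff]; linarith)]
  norm_num

lemma expMeasure_Iio_zero : expMeasure 1 (Set.Iio 0) = 0 := by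
  rw [expMeasure, gammaMeasure, withDensity_apply _ measurableSet_Iio]
  exact lintegral_gammaPDF_of_nonpos le_rfl

variable {Ω : Type*} [MeasurableSpace Ω] (P : Measure Ω) [IsProbabilityMeasure P]
    (T : ℕ → Ω → ℝ)

lemma T_nonneg_ae (hmeas : ∀ i, Measurable (T i)) (hdist : ∀ i, P.map (T i) = expMeasure 1) :
    ∀ᵐ ω ∂P, ∀ i, 0 ≤ T i ω := by
  rw [ae_all_iff]
  intro i
  have : P {ω | T i ω < 0} = 0 := by
    have : P ((T i) ⁻¹' (Set.Iio 0)) = expMeasure 1 (Set.Iio 0) := by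
      rw [← hdist i, Measure.map_apply (hmeas i) measurableSet_Iio]
    simpa [Set.preimage, expMeasure_Iio_zero] using this
  filter_upwards [measure_eq_zero_iff_ae_notMem.mp this] with ω hω
  simpa using not_lt.mp hω

lemma tail_one (hmeas : ∀ i, Measurable (T i)) (hdist : ∀ i, P.map (T i) = expMeasure 1)
    {n : ℕ} {a : ℝ} (ha : a < 0) :
    P {ω | a < ∑ i ∈ Finset.range n, T i ω} = 1 := by
  have h := T_nonneg_ae P T hmeas hdist
  refine le_antisymm prob_le_one ?_
  have : ∀ᵐ ω ∂P, ω ∈ {ω | a < ∑ i ∈ Finset.range n, T i ω} := by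
    filter_upwards [h] with ω hω
    exact lt_of_lt_of_le ha (Finset.sum_nonneg fun i _ => hω i)
  calc (1:ENNReal) = P Set.univ := (measure_univ).symm
    _ ≤ P {ω | a < ∑ i ∈ Finset.range n, T i ω} := by
        rw [← measure_congr (Filter.eventuallyEq_univ.mpr this)]; rfl

lemma poly_integral (y : ℝ) (n : ℕ) :
    ∫ t in (0:ℝ)..y, (∑ k ∈ Finset.range n, (y-t)^k / (Nat.factorial k)) =
      ∑ k ∈ Finset.range n, y^(k+1) / (Nat.factorial (k+1)) := by
  rw [intervalIntegral.integral_finset_sum]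
  · refine Finset.sum_congr rfl fun k _ => ?_
    have : ∀ t:ℝ, (y - t)^k / (Nat.factorial k) = (fun s : ℝ => s^k / (Nat.factorial k)) (y - t) :=
      fun t => rfl
    rw [intervalIntegral.integral_congr (g := fun t => (fun s : ℝ => s^k / (Nat.factorial k)) (y - t))
        (fun t _ => this t), intervalIntegral.integral_comp_sub_left (fun s : ℝ => s ^ k / (Nat.factorial k)) y]
    simp only [sub_self, sub_zero, intervalIntegral.integral_div, integral_pow]
    rw [Nat.factorial_succ]
    have hk : ((Nat.factorial k : ℝ)) ≠ 0 := by positivity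
    push_cast
    field_simp
    simp
  · intro k _
    apply Continuous.intervalIntegrable
    continuity

lemma erlang_tail (hmeas : ∀ i, Measurable (T i))
    (hindep : iIndepFun T P)
    (hdist : ∀ i, P.map (T i) = expMeasure 1) :
    ∀ n (y : ℝ), 0 ≤ y →
      P {ω | y < ∑ i ∈ Finset.range n, T i ω} =
        ENNReal.ofReal ((∑ k ∈ Finset.range n, y^k / (Nat.factorial k)) * Real.exp (-y)) := by
  intro n
  induction n with
  | zero =>
    intro y hy
    have : {ω : Ω | y < ∑ i ∈ Finset.range 0, T i ω} = ∅ := by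
      ext ω; simp; linarith
    rw [this]
    simp
  | succ n ih =>
    intro y hy
    set S : Ω → ℝ := fun ω => ∑ i ∈ Finset.range n, T i ω with hSdef
    have hS : Measurable S := Finset.measurable_sum _ (fun i _ => hmeas i)
    have hTS : IndepFun (T n) S P := by
      have h := hindep.indepFun_finsetSum_of_notMem hmeas
        (s := Finset.range n) (i := n) (by simp)
      have he : (∑ j ∈ Finset.range n, T j) = S := by
        funext ω; simp [hSdef]
      rw [he] at h
      exact h.symm
    have hmap : P.map (fun ω => (T n ω, S ω)) = (P.map (T n)).prod (P.map S) :=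
      (indepFun_iff_map_prod_eq_prod_map_map (hmeas n).aemeasurable hS.aemeasurable).mp hTS
    have hA : MeasurableSet {p : ℝ × ℝ | y < p.1 + p.2} :=
      measurableSet_lt measurable_const (measurable_fst.add measurable_snd)
    have hpre : {ω : Ω | y < ∑ i ∈ Finset.range (n+1), T i ω}
        = (fun ω => (T n ω, S ω)) ⁻¹' {p : ℝ × ℝ | y < p.1 + p.2} := by
      ext ω
      simp [Finset.sum_range_succ, hSdef, add_comm]
    -- tail of the law of S
    have hFS : ∀ a : ℝ, (P.map S) (Set.Ioi a) = P {ω | a < S ω} := by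
      intro a
      rw [Measure.map_apply hS measurableSet_Ioi]
      rfl
    have hFmeas : Measurable (fun t : ℝ => (P.map S) (Set.Ioi (y - t))) := by
      have h1 : Antitone (fun a : ℝ => (P.map S) (Set.Ioi a)) :=
        fun a b hab => measure_mono (Set.Ioi_subset_Ioi hab)
      exact h1.measurable.comp (measurable_const.sub measurable_id)
    rw [hpre, Measure.map_apply ((hmeas n).prodMk hS) hA |>.symm, hmap,
      Measure.prod_apply hA]
    have hslice : ∀ t : ℝ, (Prod.mk t ⁻¹' {p : ℝ × ℝ | y < p.1 + p.2}) = Set.Ioi (y - t) := by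
      intro t; ext s
      simp only [Set.mem_preimage, Set.mem_setOf_eq, Set.mem_Ioi, sub_lt_iff_lt_add]
      constructor <;> intro <;> linarith
    simp only [hslice]
    rw [hdist n]
    have hwd : expMeasure 1 = volume.withDensity (exponentialPDF 1) := rfl
    have hpdfmeas : Measurable (exponentialPDF 1) :=
      (measurable_exponentialPDFReal 1).ennreal_ofReal
    rw [hwd, lintegral_withDensity_eq_lintegral_mul _ hpdfmeas hFmeas]
    rw [← lintegral_add_compl (μ := volume)
      (f := fun t => (exponentialPDF 1 * fun t => (P.map S) (Set.Ioi (y - t))) t)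
      (measurableSet_Iic (a := y))]
    have hIoi : ∫⁻ t in (Set.Iic y)ᶜ,
        (exponentialPDF 1 * fun t => (P.map S) (Set.Ioi (y - t))) t
        = ENNReal.ofReal (Real.exp (-y)) := by
      rw [Set.compl_Iic]
      rw [setLIntegral_congr_fun (g := fun t => exponentialPDF 1 t) measurableSet_Ioi
        (fun ⦃t⦄ (ht : y < t) => by
          have h5 : (P.map S) (Set.Ioi (y - t)) = 1 := by
            rw [hFS]; exact tail_one P T hmeas hdist (by linarith)
          simp [h5])]
      rw [← withDensity_apply _ measurableSet_Ioi, ← hwd]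
      exact expMeasure_Ioi hy
    rw [hIoi]
    have hsplit : Set.Iic y = Set.Iio 0 ∪ Set.Icc 0 y := by
      ext x
      simp only [Set.mem_Iic, Set.mem_union, Set.mem_Iio, Set.mem_Icc]
      constructor
      · intro h; rcases lt_or_ge x 0 with h0 | h0
        · exact Or.inl h0
        · exact Or.inr ⟨h0, h⟩
      · rintro (h | ⟨h1, h2⟩)
        · exact h.le.trans hy
        · exact h2
    have hdisj : Disjoint (Set.Iio (0:ℝ)) (Set.Icc 0 y) := by
      rw [Set.disjoint_left]
      rintro x (hx : x < 0) ⟨h0, _⟩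
      linarith
    rw [hsplit, lintegral_union measurableSet_Icc hdisj]
    have hneg : ∫⁻ t in Set.Iio (0:ℝ),
        (exponentialPDF 1 * fun t => (P.map S) (Set.Ioi (y - t))) t = 0 := by
      rw [setLIntegral_congr_fun (g := fun _ => (0:ENNReal)) measurableSet_Iio
        (fun ⦃t⦄ (ht : t < 0) => by simp [exponentialPDF_of_neg ht])]
      simp
    rw [hneg, zero_add]
    have hmid : ∫⁻ t in Set.Icc (0:ℝ) y,
        (exponentialPDF 1 * fun t => (P.map S) (Set.Ioi (y - t))) t
        = ENNReal.ofReal ((∑ k ∈ Finset.range n, y^(k+1) / (Nat.factorial (k+1)))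
            * Real.exp (-y)) := by
      have hcong : ∀ t ∈ Set.Icc (0:ℝ) y,
          (exponentialPDF 1 * fun t => (P.map S) (Set.Ioi (y - t))) t
          = ENNReal.ofReal ((∑ k ∈ Finset.range n, (y-t)^k / (Nat.factorial k))
              * Real.exp (-y)) := by
        rintro t ⟨ht0, hty⟩
        have h1 : exponentialPDF 1 t = ENNReal.ofReal (Real.exp (-t)) := by
          rw [exponentialPDF_of_nonneg ht0]; norm_num
        have h2 : (P.map S) (Set.Ioi (y - t)) =
            ENNReal.ofReal ((∑ k ∈ Finset.range n, (y-t)^k / (Nat.factorial k))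
              * Real.exp (-(y-t))) := by
          rw [hFS]; exact ih (y - t) (by linarith)
        simp only [Pi.mul_apply, h1, h2, ← ENNReal.ofReal_mul (Real.exp_nonneg _)]
        congr 1
        rw [show (-y) = -t + -(y-t) by ring, Real.exp_add]
        ring
      rw [setLIntegral_congr_fun measurableSet_Icc hcong]
      have hg : Continuous (fun t : ℝ => (∑ k ∈ Finset.range n, (y-t)^k / (Nat.factorial k))
          * Real.exp (-y)) := by
        apply Continuous.mul _ continuous_const
        exact continuous_finset_sum _ (fun k _ =>
          ((continuous_const.sub continuous_id).pow k).div_const _)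
      rw [← ofReal_integral_eq_lintegral_ofReal (hg.integrableOn_Icc)
        (ae_restrict_of_forall_mem measurableSet_Icc (fun t ht => ?_))]
      · congr 1
        rw [integral_Icc_eq_integral_Ioc, ← intervalIntegral.integral_of_le hy,
          intervalIntegral.integral_mul_const, poly_integral]
      · rcases ht with ⟨ht0, hty⟩
        apply mul_nonneg _ (Real.exp_nonneg _)
        exact Finset.sum_nonneg fun k _ =>
          div_nonneg (pow_nonneg (by linarith) k) (Nat.cast_nonneg _)
    rw [hmid, ← ENNReal.ofReal_add (by positivity) (Real.exp_nonneg _)]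
    congr 1
    rw [Finset.sum_range_succ' (fun k => y^k / (Nat.factorial k)) n]
    simp [Nat.factorial]
    ring

theorem stmt_0' {Ω : Type*} [MeasurableSpace Ω] (P : Measure Ω) [IsProbabilityMeasure P]
    (T : ℕ → Ω → ℝ) (hmeas : ∀ i, Measurable (T i))
    (hindep : iIndepFun T P)
    (hdist : ∀ i, P.map (T i) = expMeasure 1)
    (c x₀ : ℝ) (hc : 0 < c) (hx₀ : 0 ≤ x₀) (n : ℕ) (hn : 1 ≤ n) :
    ENNReal.ofReal (1 - ∑ k ∈ Finset.range n,
        (max (((n : ℝ) - x₀) / c) 0) ^ k / (Nat.factorial k)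
          * Real.exp (-(max (((n : ℝ) - x₀) / c) 0)))
      ≤ P {ω | ∃ k, 1 ≤ k ∧ k ≤ n ∧ (x₀ + c * ∑ i ∈ Finset.range k, T i ω - k : ℝ) ≤ 0} := by
  set v : ℝ := ((n : ℝ) - x₀) / c with hvdef
  have key : P {ω | (x₀ + c * ∑ i ∈ Finset.range n, T i ω - n : ℝ) ≤ 0}
      ≤ P {ω | ∃ k, 1 ≤ k ∧ k ≤ n ∧ (x₀ + c * ∑ i ∈ Finset.range k, T i ω - k : ℝ) ≤ 0} :=
    measure_mono (fun ω h => ⟨n, hn, le_rfl, h⟩)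
  by_cases hv : 0 ≤ v
  · have hyv : max v 0 = v := max_eq_left hv
    rw [hyv]
    have hmeasS : MeasurableSet {ω : Ω | v < ∑ i ∈ Finset.range n, T i ω} :=
      measurableSet_lt measurable_const (Finset.measurable_sum _ fun i _ => hmeas i)
    have hset : {ω : Ω | (x₀ + c * ∑ i ∈ Finset.range n, T i ω - n : ℝ) ≤ 0}
        = {ω | v < ∑ i ∈ Finset.range n, T i ω}ᶜ := by
      ext ω
      simp only [Set.mem_setOf_eq, Set.mem_compl_iff, not_lt, hvdef]
      rw [le_div_iff₀ hc]
      constructor <;> intro h <;> nlinarith [mul_comm c (∑ i ∈ Finset.range n, T i ω)]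
    have ha : (∑ k ∈ Finset.range n, v ^ k / (Nat.factorial k) * Real.exp (-v))
        = (∑ k ∈ Finset.range n, v ^ k / (Nat.factorial k)) * Real.exp (-v) :=
      (Finset.sum_mul _ _ _).symm
    set b : ℝ := (∑ k ∈ Finset.range n, v ^ k / (Nat.factorial k)) * Real.exp (-v) with hbdef
    have hb0 : 0 ≤ b := by
      apply mul_nonneg _ (Real.exp_nonneg _)
      exact Finset.sum_nonneg fun k _ =>
        div_nonneg (pow_nonneg hv k) (Nat.cast_nonneg _)
    have hb1 : b ≤ 1 := by
      calc b ≤ Real.exp v * Real.exp (-v) :=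
            mul_le_mul_of_nonneg_right (Real.sum_le_exp_of_nonneg hv n) (Real.exp_nonneg _)
        _ = 1 := by rw [← Real.exp_add]; simp
    have htail := erlang_tail P T hmeas hindep hdist n v hv
    rw [ha]
    calc ENNReal.ofReal (1 - b) = 1 - ENNReal.ofReal b := by
          rw [ENNReal.ofReal_sub 1 hb0, ENNReal.ofReal_one]
      _ = P {ω | v < ∑ i ∈ Finset.range n, T i ω}ᶜ := by
          rw [prob_compl_eq_one_sub hmeasS, htail, hbdef]
      _ = P {ω | (x₀ + c * ∑ i ∈ Finset.range n, T i ω - n : ℝ) ≤ 0} := by rw [hset]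
      _ ≤ _ := key
  · push_neg at hv
    have hyv : max v 0 = 0 := max_eq_right hv.le
    rw [hyv]
    obtain ⟨m, rfl⟩ : ∃ m, n = m + 1 := ⟨n - 1, by omega⟩
    have hsum : (∑ k ∈ Finset.range (m+1),
        (0:ℝ) ^ k / (Nat.factorial k) * Real.exp (-0)) = 1 := by
      rw [Finset.sum_range_succ' (fun k => (0:ℝ) ^ k / (Nat.factorial k) * Real.exp (-0)) m]
      simp [zero_pow]
    rw [hsum]
    simp

end CLaux

/-- lower bound on the probability of confirmation within `n` blocks. -/
theorem stmt_0 {Ω : Type*} [MeasurableSpace Ω] (P : Measure Ω) [IsProbabilityMeasure P]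
    (T : ℕ → Ω → ℝ) (hmeas : ∀ i, Measurable (T i))
    (hindep : iIndepFun T P)
    (hdist : ∀ i, P.map (T i) = expMeasure 1)
    (c x₀ : ℝ) (hc : 0 < c) (hx₀ : 0 ≤ x₀) (n : ℕ) (hn : 1 ≤ n) :
    ENNReal.ofReal (1 - ∑ k ∈ Finset.range n,
        (max (((n : ℝ) - x₀) / c) 0) ^ k / (Nat.factorial k)
          * Real.exp (-(max (((n : ℝ) - x₀) / c) 0)))
      ≤ P {ω | ∃ k, 1 ≤ k ∧ k ≤ n ∧ CLskeleton T c x₀ k ω ≤ 0} := by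
  exact stmt_0' P T hmeas hindep hdist c x₀ hc hx₀ n hn
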